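/- Suppose X_1,…,X_N are Banach spaces each having summable Szlenk index with the same constant M. Then the Banach space Y = (⊕_{j=1}^N X_j)_{c0} (the finite c0-sum, i.e., the direct sum with the max norm) has summable Szlenk index with constant 4M. -/

import Mathlib

open Filter Topology Set
open scoped ENNReal NNReal

noncomputable section

/-- The `ε`-Szlenk derivation of a subset of the dual space, w.r.t. the weak* topology. -/
def szlenkDeriv {X : Type*} [NormedAddCommGroup X] [NormedSpace ℝ X] (ε : ℝ)
    (K : Set (StrongDual ℝ X)) : Set (StrongDual ℝ X) :=
  {f | f ∈ K ∧ ∀ U : Set (WeakDual ℝ X), IsOpen U →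
    StrongDual.toWeakDual f ∈ U →
    ε < Metric.diam {g | g ∈ K ∧ StrongDual.toWeakDual g ∈ U}}

/-- Iterated Szlenk derivations `ι_{ε₁}⋯ι_{εₙ} K` for a list `[ε₁, …, εₙ]`. -/
def szlenkDerivList {X : Type*} [NormedAddCommGroup X] [NormedSpace ℝ X] (l : List ℝ)
    (K : Set (StrongDual ℝ X)) : Set (StrongDual ℝ X) :=
  l.foldr szlenkDeriv K

/-- The closed unit ball of the dual space. -/
def dualUnitBall (X : Type*) [NormedAddCommGroup X] [NormedSpace ℝ X] :
    Set (StrongDual ℝ X) :=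
  Metric.closedBall 0 1

/-- `X` has summable Szlenk index with constant `M`. -/
def HasSummableSzlenkWith (X : Type*) [NormedAddCommGroup X] [NormedSpace ℝ X] (M : ℝ) : Prop :=
  ∀ l : List ℝ, (∀ ε ∈ l, 0 < ε) → (szlenkDerivList l (dualUnitBall X)).Nonempty → l.sum ≤ M

/-- `X` has summable Szlenk index. -/
def HasSummableSzlenk (X : Type*) [NormedAddCommGroup X] [NormedSpace ℝ X] : Prop :=
  ∃ M > 0, HasSummableSzlenkWith X M

/-- When some finite iterate of the Szlenk derivation kills the dual ball, the ε-Szlenk index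
`Sz(X, ε)` is the least `n : ℕ` with `ι_ε^n B_{X*} = ∅`. -/
def szlenkIdx (X : Type*) [NormedAddCommGroup X] [NormedSpace ℝ X] (ε : ℝ) : ℕ :=
  sInf {n : ℕ | (szlenkDeriv ε)^[n] (dualUnitBall X) = ∅}

/-- `Sz(X) ≤ ω`: the ε-Szlenk index is finite for every ε > 0. -/
def SzlenkLeOmega (X : Type*) [NormedAddCommGroup X] [NormedSpace ℝ X] : Prop :=
  ∀ ε : ℝ, 0 < ε → ∃ n : ℕ, (szlenkDeriv ε)^[n] (dualUnitBall X) = ∅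

/-- `Sz(X) = ω`: finite ε-Szlenk indices, unbounded as ε → 0. -/
def SzlenkEqOmega (X : Type*) [NormedAddCommGroup X] [NormedSpace ℝ X] : Prop :=
  SzlenkLeOmega X ∧ ∀ N : ℕ, ∃ ε : ℝ, 0 < ε ∧ ((szlenkDeriv ε)^[N] (dualUnitBall X)).Nonempty

/-- `X` has Szlenk power type `v`: `log Sz(X,ε)/|log ε| → v` as `ε → 0⁺`. -/
def HasSzlenkPowerType (X : Type*) [NormedAddCommGroup X] [NormedSpace ℝ X] (v : ℝ) : Prop :=
  Tendsto (fun ε : ℝ => Real.log (szlenkIdx X ε) / |Real.log ε|) (𝓝[>] (0:ℝ)) (𝓝 v)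

/-- `(Σᵢ |a i|^p)^{1/p}`, the maximum of the `|a i|` when `p = ∞`. -/
def pNorm (p : ℝ≥0∞) {ι : Type*} [Fintype ι] (a : ι → ℝ) : ℝ :=
  if p = ∞ then ((Finset.univ.sup fun i => ‖a i‖₊ : ℝ≥0) : ℝ)
  else (∑ i, |a i| ^ p.toReal) ^ (1 / p.toReal)

/-- A normed space `Z` with coordinate functionals `coord` is `C`-asymptotic `ℓ_p`:
every block sequence `x₁, …, xₙ` of finitely supported vectors with successive supports
contained in `[n, ∞)` (1-based basis indexing; index `m : ℕ` is the `(m+1)`-st basis vector)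
satisfies `C⁻¹ (Σ‖xⱼ‖^p)^{1/p} ≤ ‖Σ xⱼ‖ ≤ C (Σ‖xⱼ‖^p)^{1/p}`. -/
def IsAsymptoticLp (p : ℝ≥0∞) (C : ℝ) {Z : Type*} [NormedAddCommGroup Z]
    (coord : ℕ → Z → ℝ) : Prop :=
  ∀ (n : ℕ) (x : Fin n → Z),
    (∀ j, {m | coord m (x j) ≠ 0}.Finite) →
    (∀ j m, coord m (x j) ≠ 0 → n ≤ m + 1) →
    (∀ (j k : Fin n), j < k → ∀ m m', coord m (x j) ≠ 0 → coord m' (x k) ≠ 0 → m < m') →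
    C⁻¹ * pNorm p (fun j => ‖x j‖) ≤ ‖∑ j, x j‖ ∧
      ‖∑ j, x j‖ ≤ C * pNorm p (fun j => ‖x j‖)

/-- `(e, e')` is a 1-unconditional Schauder basis of `E` with biorthogonal functionals `e'`. -/
structure IsBasis1Unconditional {E : Type*} [NormedAddCommGroup E] [NormedSpace ℝ E]
    (e : ℕ → E) (e' : ℕ → StrongDual ℝ E) : Prop where
  biorth : ∀ m n, e' m (e n) = if m = n then 1 else 0
  expansion : ∀ x : E, HasSum (fun n => e' n x • e n) x
  unconditional : ∀ (x : E) (σ : ℕ → ℝ), (∀ n, σ n = 1 ∨ σ n = -1) →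
    ∃ y : E, HasSum (fun n => (σ n * e' n x) • e n) y ∧ ‖y‖ = ‖x‖

/-- The basis `e` of `E` is shrinking: the norm of the restriction of any functional to the
closed span of the tail of the basis tends to `0`. -/
def ShrinkingBasis {E : Type*} [NormedAddCommGroup E] [NormedSpace ℝ E] (e : ℕ → E) : Prop :=
  ∀ f : StrongDual ℝ E,
    Tendsto (fun k =>
      ‖f.comp ((Submodule.span ℝ (e '' Set.Ici k)).topologicalClosure).subtypeL‖)
      atTop (𝓝 0)

/-- `T` realizes `Y` as the `E`-direct sum `(⊕ₙ Xₙ)_E` with respect to the basis `e`. -/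
structure IsDirectSumE {E : Type*} [NormedAddCommGroup E] [NormedSpace ℝ E] (e : ℕ → E)
    (X : ℕ → Type*) [∀ n, NormedAddCommGroup (X n)] [∀ n, NormedSpace ℝ (X n)]
    {Y : Type*} [NormedAddCommGroup Y] [NormedSpace ℝ Y]
    (T : Y →ₗ[ℝ] ∀ n, X n) : Prop where
  range_eq : Set.range T = {x | Summable fun n => ‖x n‖ • e n}
  norm_eq : ∀ y, ‖y‖ = ‖∑' n, ‖T y n‖ • e n‖

/-- `T` realizes `Y` as the c₀-sum `(⊕ₙ Xₙ)_{c₀}`. -/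
structure IsC0Sum (X : ℕ → Type*) [∀ n, NormedAddCommGroup (X n)] [∀ n, NormedSpace ℝ (X n)]
    {Y : Type*} [NormedAddCommGroup Y] [NormedSpace ℝ Y] (T : Y →ₗ[ℝ] ∀ n, X n) : Prop where
  range_eq : Set.range T = {x | Tendsto (fun n => ‖x n‖) atTop (𝓝 0)}
  norm_eq : ∀ y, ‖y‖ = ⨆ n, ‖T y n‖

/-- `T` realizes `Y` as the `ℓ_p`-sum `(⊕ₙ Xₙ)_{ℓ_p}`. -/
structure IsLpSum (p : ℝ) (X : ℕ → Type*) [∀ n, NormedAddCommGroup (X n)]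
    [∀ n, NormedSpace ℝ (X n)] {Y : Type*} [NormedAddCommGroup Y] [NormedSpace ℝ Y]
    (T : Y →ₗ[ℝ] ∀ n, X n) : Prop where
  range_eq : Set.range T = {x | Summable fun n => ‖x n‖ ^ p}
  norm_eq : ∀ y, ‖y‖ = (∑' n, ‖T y n‖ ^ p) ^ (1/p)

/-- `ν` is a norm on `X`. -/
structure IsNormOn {X : Type*} [NormedAddCommGroup X] [NormedSpace ℝ X] (ν : X → ℝ) : Prop where
  add_le : ∀ x y, ν (x + y) ≤ ν x + ν y
  smul_eq : ∀ (a : ℝ) (x : X), ν (a • x) = |a| * ν x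
  eq_zero_iff : ∀ x : X, ν x = 0 ↔ x = 0

/-- The dual norm on `X*` corresponding to the (equivalent) norm `ν` on `X`. -/
def dualNormOf {X : Type*} [NormedAddCommGroup X] [NormedSpace ℝ X]
    (ν : X → ℝ) (f : StrongDual ℝ X) : ℝ :=
  sSup {r | ∃ x : X, ν x ≤ 1 ∧ r = |f x|}

/-- `sup_n C_q(X_n) < ∞`: a common constant `c` with `Sz(Xₙ, ε) ≤ c ε^{-q}`. -/
def PowerTypeBddWith (X : ℕ → Type*) [∀ n, NormedAddCommGroup (X n)]
    [∀ n, NormedSpace ℝ (X n)] (q : ℝ) : Prop :=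
  ∃ c : ℝ, ∀ n, ∀ ε ∈ Set.Ioo (0:ℝ) 1, (szlenkIdx (X n) ε : ℝ) ≤ c * ε ^ (-q)

/-- The fast growing hierarchy: `g 0 n = n + 1`, `g (k+1) n = (g k)^[n] n`. -/
def fastGrowing : ℕ → ℕ → ℕ
  | 0, n => n + 1
  | k+1, n => (fastGrowing k)^[n] n

end

noncomputable section SzlenkAux

open Metric Bornology NormedSpace

section Basic

variable {Z : Type*} [NormedAddCommGroup Z] [NormedSpace ℝ Z]

/-- The preimage of a set of the dual under the identity from the weak dual. -/
def preW (K : Set (StrongDual ℝ Z)) : Set (WeakDual ℝ Z) :=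
  WeakDual.toStrongDual ⁻¹' K

lemma mem_preW {K : Set (StrongDual ℝ Z)} {f : StrongDual ℝ Z} :
    StrongDual.toWeakDual f ∈ preW K ↔ f ∈ K := Iff.rfl

lemma szlenkDeriv_subset (ε : ℝ) (K : Set (StrongDual ℝ Z)) :
    szlenkDeriv ε K ⊆ K := fun _ hf => hf.1

lemma szlenkDerivList_subset (l : List ℝ) (K : Set (StrongDual ℝ Z)) :
    szlenkDerivList l K ⊆ K := by
  induction l with
  | nil => exact subset_rfl
  | cons ε l ih => exact (szlenkDeriv_subset ε _).trans ih

lemma szlenkDeriv_anti {ε ε' : ℝ} (h : ε' ≤ ε) (K : Set (StrongDual ℝ Z)) :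
    szlenkDeriv ε K ⊆ szlenkDeriv ε' K :=
  fun _ hf => ⟨hf.1, fun U hU hfU => lt_of_le_of_lt h (hf.2 U hU hfU)⟩

lemma szlenkDeriv_mono {K L : Set (StrongDual ℝ Z)} (hKL : K ⊆ L)
    (hL : IsBounded L) (ε : ℝ) : szlenkDeriv ε K ⊆ szlenkDeriv ε L := by
  rintro f ⟨hfK, hf⟩
  refine ⟨hKL hfK, fun U hU hfU => (hf U hU hfU).trans_le (Metric.diam_mono ?_ ?_)⟩
  · exact fun g hg => ⟨hKL hg.1, hg.2⟩
  · exact hL.subset fun g hg => hg.1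

lemma szlenkDerivList_mono {K L : Set (StrongDual ℝ Z)} (hKL : K ⊆ L)
    (hL : IsBounded L) (l : List ℝ) : szlenkDerivList l K ⊆ szlenkDerivList l L := by
  induction l with
  | nil => exact hKL
  | cons ε l ih =>
    have : IsBounded (szlenkDerivList l L) := hL.subset (szlenkDerivList_subset l L)
    exact szlenkDeriv_mono ih this ε

lemma isClosed_preW_szlenkDeriv {K : Set (StrongDual ℝ Z)}
    (hK : IsClosed (preW K)) (ε : ℝ) : IsClosed (preW (szlenkDeriv ε K)) := by
  refine isClosed_of_closure_subset fun w hw => ?_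
  have hwK : w ∈ preW K := by
    have : closure (preW (szlenkDeriv ε K)) ⊆ closure (preW K) :=
      closure_mono (Set.preimage_mono (szlenkDeriv_subset ε K))
    exact hK.closure_subset (this hw)
  refine ⟨hwK, fun U hU hwU => ?_⟩
  obtain ⟨w', hw'U, hw'⟩ := (mem_closure_iff.1 hw) U hU hwU
  exact hw'.2 U hU hw'U

/-- Szlenk derivation of a finite union of weak*-closed bounded sets. -/
lemma szlenkDeriv_sUnion {F : Set (Set (StrongDual ℝ Z))} (hF : F.Finite)
    (hcl : ∀ A ∈ F, IsClosed (preW A)) (hbdd : ∀ A ∈ F, IsBounded A) {ε : ℝ} (hε : 0 ≤ ε) :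
    szlenkDeriv ε (⋃₀ F) ⊆ ⋃ A ∈ F, szlenkDeriv (ε / 2) A := by
  intro f hf
  by_contra hcon
  simp only [Set.mem_iUnion, not_exists] at hcon
  obtain ⟨hfmem, hfprop⟩ := hf
  have key : ∀ A : Set (StrongDual ℝ Z), ∃ U : Set (WeakDual ℝ Z),
      IsOpen U ∧ StrongDual.toWeakDual f ∈ U ∧
      (A ∈ F → ∀ g ∈ A, StrongDual.toWeakDual g ∈ U → dist f g ≤ ε / 2) := by
    intro A
    by_cases hAF : A ∈ F
    · by_cases hfA : f ∈ A
      · have hnot := hcon A hAF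
        rw [szlenkDeriv, Set.mem_setOf_eq] at hnot
        push_neg at hnot
        obtain ⟨U, hUopen, hfUmem, hdiam⟩ := hnot hfA
        refine ⟨U, hUopen, hfUmem, fun _ g hg hgU => ?_⟩
        calc dist f g ≤ Metric.diam {g | g ∈ A ∧ StrongDual.toWeakDual g ∈ U} :=
              Metric.dist_le_diam_of_mem ((hbdd A hAF).subset fun x hx => hx.1)
                ⟨hfA, hfUmem⟩ ⟨hg, hgU⟩
          _ ≤ ε / 2 := hdiam
      · refine ⟨(preW A)ᶜ, (hcl A hAF).isOpen_compl, hfA, fun _ g hg hgU => ?_⟩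
        exact absurd (mem_preW.2 hg) hgU
    · exact ⟨Set.univ, isOpen_univ, Set.mem_univ _, fun h => absurd h hAF⟩
  choose U hUopen hUmem hUdist using key
  set V : Set (WeakDual ℝ Z) := ⋂ A ∈ F, U A with hV
  have hVopen : IsOpen V := hF.isOpen_biInter fun A _ => hUopen A
  have hVmem : StrongDual.toWeakDual f ∈ V := Set.mem_iInter₂.2 fun A _ => hUmem A
  have hlt := hfprop V hVopen hVmem
  have hle : Metric.diam {g | g ∈ ⋃₀ F ∧ StrongDual.toWeakDual g ∈ V} ≤ ε := by
    refine Metric.diam_le_of_forall_dist_le hε fun g hg h hh => ?_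
    obtain ⟨⟨Ag, hAgF, hgAg⟩, hgV⟩ := hg
    obtain ⟨⟨Ah, hAhF, hhAh⟩, hhV⟩ := hh
    have h1 : dist f g ≤ ε / 2 :=
      hUdist Ag hAgF g hgAg (Set.mem_iInter₂.1 hgV Ag hAgF)
    have h2 : dist f h ≤ ε / 2 :=
      hUdist Ah hAhF h hhAh (Set.mem_iInter₂.1 hhV Ah hAhF)
    calc dist g h ≤ dist g f + dist f h := dist_triangle g f h
      _ ≤ ε / 2 + ε / 2 := by rw [dist_comm]; exact add_le_add h1 h2
      _ = ε := by ring
  exact absurd hlt (not_lt.2 hle)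

end Basic
section Pi

open Metric Bornology NormedSpace

variable {N : ℕ} {X : Fin N → Type*} [∀ j, NormedAddCommGroup (X j)]
  [∀ j, NormedSpace ℝ (X j)]

/-- The `j`-th coordinate of a functional on the product. -/
def coordD (j : Fin N) (f : StrongDual ℝ (∀ j, X j)) : StrongDual ℝ (X j) :=
  f.comp ⟨LinearMap.single ℝ X j, continuous_single j⟩

lemma coordD_apply (j : Fin N) (f : StrongDual ℝ (∀ j, X j)) (x : X j) :
    coordD j f x = f (Pi.single j x) := rfl

lemma coordD_sub (j : Fin N) (f g : StrongDual ℝ (∀ j, X j)) :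
    coordD j (f - g) = coordD j f - coordD j g := by
  ext x; simp [coordD_apply]

lemma apply_eq_sum_coordD (f : StrongDual ℝ (∀ j, X j)) (x : ∀ j, X j) :
    f x = ∑ j, coordD j f (x j) := by
  conv_lhs => rw [← Finset.univ_sum_single x, map_sum]
  rfl

/-- The dual of the sup-norm product is the `ℓ¹` sum of the duals. -/
lemma norm_eq_sum_coordD (f : StrongDual ℝ (∀ j, X j)) :
    ‖f‖ = ∑ j, ‖coordD j f‖ := by
  refine le_antisymm ?_ ?_
  · refine f.opNorm_le_bound (Finset.sum_nonneg fun j _ => norm_nonneg _) fun x => ?_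
    rw [apply_eq_sum_coordD]
    calc ‖∑ j, coordD j f (x j)‖ ≤ ∑ j, ‖coordD j f (x j)‖ := norm_sum_le _ _
      _ ≤ ∑ j, ‖coordD j f‖ * ‖x‖ := by
          refine Finset.sum_le_sum fun j _ => ((coordD j f).le_opNorm _).trans ?_
          exact mul_le_mul_of_nonneg_left (norm_le_pi_norm x j) (norm_nonneg _)
      _ = (∑ j, ‖coordD j f‖) * ‖x‖ := (Finset.sum_mul _ _ _).symm
  · refine le_of_forall_pos_le_add fun ε hε => ?_
    have hεN : 0 < ε / (N + 1) := by positivity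
    have key : ∀ j, ∃ y : X j, ‖y‖ ≤ 1 ∧ ‖coordD j f‖ - ε / (N + 1) < coordD j f y := by
      intro j
      by_cases hc : ‖coordD j f‖ - ε / (N + 1) < 0
      · exact ⟨0, by simp, by simpa using hc⟩
      · have hr : ‖coordD j f‖ - ε / (N + 1) < ‖coordD j f‖ := by linarith
        obtain ⟨x, hx1, hx2⟩ := (coordD j f).exists_lt_apply_of_lt_opNorm hr
        rcases le_or_gt 0 (coordD j f x) with hsgn | hsgn
        · refine ⟨x, hx1.le, ?_⟩
          rwa [Real.norm_eq_abs, abs_of_nonneg hsgn] at hx2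
        · refine ⟨-x, (norm_neg x).le.trans hx1.le, ?_⟩
          rw [map_neg]
          rwa [Real.norm_eq_abs, abs_of_neg hsgn] at hx2
    choose y hy1 hy2 using key
    have hxnorm : ‖(y : ∀ j, X j)‖ ≤ 1 := (pi_norm_le_iff_of_nonneg zero_le_one).2 hy1
    have hfy : f y = ∑ j, coordD j f (y j) := apply_eq_sum_coordD f y
    have h1 : ∑ j, ‖coordD j f‖ ≤ f y + N * (ε / (N + 1)) := by
      have : ∑ j, ‖coordD j f‖ ≤ ∑ j, (coordD j f (y j) + ε / (N + 1)) :=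
        Finset.sum_le_sum fun j _ => by linarith [hy2 j]
      rw [Finset.sum_add_distrib] at this
      simpa [hfy, mul_comm] using this
    have h2 : f y ≤ ‖f‖ := by
      calc f y ≤ |f y| := le_abs_self _
        _ = ‖f y‖ := rfl
        _ ≤ ‖f‖ * ‖(y : ∀ j, X j)‖ := f.le_opNorm _
        _ ≤ ‖f‖ := by
            nlinarith [norm_nonneg f, norm_nonneg (y : ∀ j, X j)]
    have h3 : (N : ℝ) * (ε / (N + 1)) ≤ ε := by
      rw [mul_div_assoc']
      rw [div_le_iff₀ (by positivity)]
      nlinarith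
    linarith

lemma norm_coordD_le (f : StrongDual ℝ (∀ j, X j)) (j : Fin N) :
    ‖coordD j f‖ ≤ ‖f‖ := by
  rw [norm_eq_sum_coordD f]
  exact Finset.single_le_sum (fun i _ => norm_nonneg (coordD i f)) (Finset.mem_univ j)

lemma continuous_coordW (j : Fin N) :
    Continuous fun w : WeakDual ℝ (∀ j, X j) =>
      (StrongDual.toWeakDual (coordD j (WeakDual.toStrongDual w)) : WeakDual ℝ (X j)) := by
  refine WeakDual.continuous_of_continuous_eval fun x => ?_
  exact WeakDual.eval_continuous (Pi.single j x)

/-- The "product" of a family of coordinate sets. -/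
def piDSet (C : ∀ j, Set (StrongDual ℝ (X j))) : Set (StrongDual ℝ (∀ j, X j)) :=
  {g | ∀ j, coordD j g ∈ C j}

lemma isClosed_preW_piDSet {C : ∀ j, Set (StrongDual ℝ (X j))}
    (h : ∀ j, IsClosed (preW (C j))) : IsClosed (preW (piDSet C)) := by
  have heq : preW (piDSet C) = ⋂ j, (fun w : WeakDual ℝ (∀ j, X j) =>
      (StrongDual.toWeakDual (coordD j (WeakDual.toStrongDual w)) : WeakDual ℝ (X j)))
        ⁻¹' (preW (C j)) := by
    ext w
    simp only [preW, Set.mem_preimage, Set.mem_iInter, piDSet, Set.mem_setOf_eq]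
    rfl
  rw [heq]
  exact isClosed_iInter fun j => (h j).preimage (continuous_coordW j)

lemma piDSet_subset_closedBall {C : ∀ j, Set (StrongDual ℝ (X j))} {R : ℝ}
    (hC : ∀ j, C j ⊆ closedBall 0 R) :
    piDSet C ⊆ closedBall (0 : StrongDual ℝ (∀ j, X j)) (N * R) := by
  intro g hg
  rw [mem_closedBall, dist_zero_right, norm_eq_sum_coordD]
  calc ∑ j, ‖coordD j g‖ ≤ ∑ _j : Fin N, R := by
        refine Finset.sum_le_sum fun j _ => ?_
        have := hC j (hg j)
        rwa [mem_closedBall, dist_zero_right] at this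
    _ = N * R := by simp [mul_comm]

end Pi
section Key

open Metric Bornology NormedSpace

variable {N : ℕ} {X : Fin N → Type*} [∀ j, NormedAddCommGroup (X j)]
  [∀ j, NormedSpace ℝ (X j)]

/-- Key product lemma: a point of the Szlenk derivation of a product set has coordinates in
Szlenk derivations of the factors, with almost-additive derivation amounts. -/
lemma mem_szlenkDeriv_piDSet {C : ∀ j, Set (StrongDual ℝ (X j))} {R : ℝ} (hR : 0 ≤ R)
    (hC : ∀ j, C j ⊆ closedBall 0 R) {ε θ : ℝ} (hθ : 0 < θ)
    {f : StrongDual ℝ (∀ j, X j)} (hf : f ∈ szlenkDeriv ε (piDSet C)) :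
    ∃ δ : Fin N → ℝ, (∀ j, 0 ≤ δ j) ∧ (∀ j, δ j ≤ 2 * R) ∧ ε - θ ≤ ∑ j, δ j ∧
      (∀ j, coordD j f ∈ C j) ∧
      (∀ j, 0 < δ j → coordD j f ∈ szlenkDeriv (δ j) (C j)) := by
  obtain ⟨hfP, hfd⟩ := hf
  set γ := θ / (2 * (N + 1)) with hγdef
  have hγ : 0 < γ := by positivity
  -- the set of diameters of weak* neighborhood traces in coordinate j
  set Dset : Fin N → Set ℝ := fun j =>
    {r : ℝ | ∃ U : Set (WeakDual ℝ (X j)), IsOpen U ∧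
      StrongDual.toWeakDual (coordD j f) ∈ U ∧
      r = Metric.diam {g | g ∈ C j ∧ StrongDual.toWeakDual g ∈ U}} with hDset
  have hne : ∀ j, (Dset j).Nonempty := fun j =>
    ⟨_, Set.univ, isOpen_univ, Set.mem_univ _, rfl⟩
  have hlb : ∀ j, ∀ r ∈ Dset j, 0 ≤ r := by
    rintro j r ⟨U, _, _, rfl⟩; exact Metric.diam_nonneg
  have hbddb : ∀ j, BddBelow (Dset j) := fun j => ⟨0, hlb j⟩
  set d : Fin N → ℝ := fun j => sInf (Dset j) with hd
  have hd0 : ∀ j, 0 ≤ d j := fun j => le_csInf (hne j) (hlb j)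
  have hdub : ∀ j, d j ≤ 2 * R := by
    intro j
    refine csInf_le_of_le (hbddb j) ⟨Set.univ, isOpen_univ, Set.mem_univ _, rfl⟩ ?_
    calc Metric.diam {g | g ∈ C j ∧ StrongDual.toWeakDual g ∈ Set.univ}
        ≤ Metric.diam (closedBall (0 : StrongDual ℝ (X j)) R) :=
          Metric.diam_mono (fun g hg => hC j hg.1) isBounded_closedBall
      _ ≤ 2 * R := Metric.diam_closedBall hR
  have hsum : ε ≤ (∑ j, d j) + θ / 2 := by
    by_contra hcontra
    push_neg at hcontra
    have hpick : ∀ j, ∃ r ∈ Dset j, r < d j + γ := fun j =>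
      Real.lt_sInf_add_pos (hne j) hγ
    choose r hrmem hrlt using hpick
    choose U hUopen hUmem hUr using hrmem
    set V : Set (WeakDual ℝ (∀ j, X j)) := ⋂ j, (fun w : WeakDual ℝ (∀ j, X j) =>
      (StrongDual.toWeakDual (coordD j (WeakDual.toStrongDual w)) : WeakDual ℝ (X j)))
        ⁻¹' (U j) with hV
    have hVopen : IsOpen V :=
      isOpen_iInter_of_finite fun j => (hUopen j).preimage (continuous_coordW j)
    have hVmem : StrongDual.toWeakDual f ∈ V := Set.mem_iInter.2 fun j => hUmem j
    have hlt := hfd V hVopen hVmem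
    have hle : Metric.diam {g | g ∈ piDSet C ∧ StrongDual.toWeakDual g ∈ V}
        ≤ ∑ j, (d j + γ) := by
      refine Metric.diam_le_of_forall_dist_le
        (Finset.sum_nonneg fun j _ => by linarith [hd0 j, hγ.le]) fun g hg h hh => ?_
      obtain ⟨hgP, hgV⟩ := hg
      obtain ⟨hhP, hhV⟩ := hh
      have hcoord : ∀ j, dist (coordD j g) (coordD j h) ≤ d j + γ := by
        intro j
        have hgU : StrongDual.toWeakDual (coordD j g) ∈ U j := Set.mem_iInter.1 hgV j
        have hhU : StrongDual.toWeakDual (coordD j h) ∈ U j := Set.mem_iInter.1 hhV j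
        have hb : IsBounded {x | x ∈ C j ∧ StrongDual.toWeakDual x ∈ U j} :=
          (isBounded_closedBall.subset (hC j)).subset fun x hx => hx.1
        calc dist (coordD j g) (coordD j h)
            ≤ Metric.diam {x | x ∈ C j ∧ StrongDual.toWeakDual x ∈ U j} :=
              Metric.dist_le_diam_of_mem hb ⟨hgP j, hgU⟩ ⟨hhP j, hhU⟩
          _ = r j := (hUr j).symm
          _ ≤ d j + γ := (hrlt j).le
      calc dist g h = ‖g - h‖ := dist_eq_norm g h
        _ = ∑ j, ‖coordD j (g - h)‖ := norm_eq_sum_coordD _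
        _ = ∑ j, dist (coordD j g) (coordD j h) := by
            refine Finset.sum_congr rfl fun j _ => ?_
            rw [coordD_sub]; exact (dist_eq_norm _ _).symm
        _ ≤ ∑ j, (d j + γ) := Finset.sum_le_sum fun j _ => hcoord j
    have hNγ : (N : ℝ) * γ ≤ θ / 2 := by
      rw [hγdef]
      rw [mul_div_assoc']
      rw [div_le_div_iff₀ (by positivity) (by norm_num)]
      nlinarith [Nat.cast_nonneg (α := ℝ) N]
    have : ε < ∑ j, d j + θ / 2 := by
      calc ε < ∑ j, (d j + γ) := lt_of_lt_of_le hlt hle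
        _ = ∑ j, d j + N * γ := by rw [Finset.sum_add_distrib]; simp [mul_comm]
        _ ≤ ∑ j, d j + θ / 2 := by linarith
    linarith
  refine ⟨fun j => max (d j - γ) 0, fun j => le_max_right _ _, ?_, ?_, hfP, ?_⟩
  · intro j
    refine max_le (by linarith [hdub j, hγ.le]) (by linarith [hR])
  · have h1 : ∀ j, d j - γ ≤ max (d j - γ) 0 := fun j => le_max_left _ _
    have h2 : ∑ j, (d j - γ) ≤ ∑ j, max (d j - γ) 0 := Finset.sum_le_sum fun j _ => h1 j
    have h3 : ∑ j, (d j - γ) = ∑ j, d j - N * γ := by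
      rw [Finset.sum_sub_distrib]; simp [mul_comm]
    have hNγ : (N : ℝ) * γ ≤ θ / 2 := by
      rw [hγdef, mul_div_assoc', div_le_div_iff₀ (by positivity) (by norm_num)]
      nlinarith [Nat.cast_nonneg (α := ℝ) N]
    linarith
  · intro j hδpos
    simp only at hδpos
    have hdγ : 0 < d j - γ := by
      by_contra hc
      push_neg at hc
      rw [sup_of_le_right hc] at hδpos
      exact lt_irrefl _ hδpos
    have hmax : max (d j - γ) 0 = d j - γ := max_eq_left hdγ.le
    simp only [hmax]
    refine ⟨hfP j, fun U hU hmemU => ?_⟩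
    have : d j ≤ Metric.diam {g | g ∈ C j ∧ StrongDual.toWeakDual g ∈ U} :=
      csInf_le (hbddb j) ⟨U, hU, hmemU, rfl⟩
    linarith

end Key

section Smul

open Metric Bornology NormedSpace

variable {Z : Type*} [NormedAddCommGroup Z] [NormedSpace ℝ Z]

lemma szlenkDeriv_smul_image {r : ℝ} (hr : 0 < r) {K : Set (StrongDual ℝ Z)}
    (hK : IsBounded K) (ε : ℝ) :
    szlenkDeriv ε ((r • ·) '' K) ⊆ (r • ·) '' szlenkDeriv (ε / r) K := by
  rintro f ⟨⟨g₀, hg₀K, rfl⟩, hfd⟩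
  refine ⟨g₀, ⟨hg₀K, fun V hV hgV => ?_⟩, rfl⟩
  have hσcont : Continuous fun w : WeakDual ℝ Z => r⁻¹ • w := continuous_const_smul _
  set U : Set (WeakDual ℝ Z) := (fun w : WeakDual ℝ Z => r⁻¹ • w) ⁻¹' V with hU
  have hUopen : IsOpen U := hV.preimage hσcont
  have hfU : StrongDual.toWeakDual (r • g₀) ∈ U := by
    show r⁻¹ • StrongDual.toWeakDual (r • g₀) ∈ V
    rw [map_smul, inv_smul_smul₀ hr.ne']
    exact hgV
  have hlt := hfd U hUopen hfU
  set S₀ := {h | h ∈ K ∧ StrongDual.toWeakDual h ∈ V} with hS₀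
  have hSeq : {g | g ∈ (r • ·) '' K ∧ StrongDual.toWeakDual g ∈ U} = (r • ·) '' S₀ := by
    ext g
    constructor
    · rintro ⟨⟨h, hhK, rfl⟩, hgU⟩
      refine ⟨h, ⟨hhK, ?_⟩, rfl⟩
      have : r⁻¹ • StrongDual.toWeakDual (r • h) ∈ V := hgU
      rwa [map_smul, inv_smul_smul₀ hr.ne'] at this
    · rintro ⟨h, ⟨hhK, hhV⟩, rfl⟩
      refine ⟨⟨h, hhK, rfl⟩, ?_⟩
      show r⁻¹ • StrongDual.toWeakDual (r • h) ∈ V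
      rwa [map_smul, inv_smul_smul₀ hr.ne']
  rw [hSeq] at hlt
  have hb₀ : IsBounded S₀ := hK.subset fun x hx => hx.1
  have hdle : Metric.diam ((r • ·) '' S₀) ≤ r * Metric.diam S₀ := by
    refine Metric.diam_le_of_forall_dist_le
      (mul_nonneg hr.le Metric.diam_nonneg) ?_
    rintro x ⟨a, ha, rfl⟩ y ⟨b, hb, rfl⟩
    show dist (r • a) (r • b) ≤ r * Metric.diam S₀
    have hd : dist (r • a) (r • b) = ‖r‖ * dist a b := dist_smul₀ r a b
    rw [Real.norm_eq_abs, abs_of_pos hr] at hd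
    exact hd.le.trans (mul_le_mul_of_nonneg_left (Metric.dist_le_diam_of_mem hb₀ ha hb) hr.le)
  rw [div_lt_iff₀' hr]
  linarith
lemma szlenkDerivList_smul_image {r : ℝ} (hr : 0 < r) {K : Set (StrongDual ℝ Z)}
    (hK : IsBounded K) (l : List ℝ) :
    szlenkDerivList l ((r • ·) '' K) ⊆ (r • ·) '' szlenkDerivList (l.map (· / r)) K := by
  induction l with
  | nil => exact subset_rfl
  | cons ε l ih =>
    have hbImg : IsBounded ((r • ·) '' szlenkDerivList (l.map (· / r)) K) := by
      have : IsBounded ((r • ·) '' K) := by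
        obtain ⟨ρ, hρ⟩ := hK.subset_closedBall 0
        refine (isBounded_closedBall (x := (0 : StrongDual ℝ Z)) (r := r * ρ)).subset ?_
        rintro x ⟨a, ha, rfl⟩
        have := hρ ha
        rw [mem_closedBall, dist_zero_right] at this ⊢
        rw [norm_smul, Real.norm_eq_abs, abs_of_pos hr]
        exact mul_le_mul_of_nonneg_left this hr.le
      exact this.subset (Set.image_mono (szlenkDerivList_subset _ _))
    calc szlenkDerivList (ε :: l) ((r • ·) '' K)
        = szlenkDeriv ε (szlenkDerivList l ((r • ·) '' K)) := rfl
      _ ⊆ szlenkDeriv ε ((r • ·) '' szlenkDerivList (l.map (· / r)) K) :=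
          szlenkDeriv_mono ih hbImg ε
      _ ⊆ (r • ·) '' szlenkDeriv (ε / r) (szlenkDerivList (l.map (· / r)) K) :=
          szlenkDeriv_smul_image hr (hK.subset (szlenkDerivList_subset _ _)) ε
      _ = (r • ·) '' szlenkDerivList ((ε :: l).map (· / r)) K := rfl

lemma smul_image_closedBall_one {r : ℝ} (hr : 0 < r) :
    (r • ·) '' (closedBall (0 : StrongDual ℝ Z) 1) = closedBall 0 r := by
  rw [Set.image_smul, _root_.smul_closedBall _ _ zero_le_one]
  simp [Real.norm_eq_abs, abs_of_pos hr]

end Smul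
section ClaimB

open Metric Bornology NormedSpace

variable {N : ℕ} {X : Fin N → Type*} [∀ j, NormedAddCommGroup (X j)]
  [∀ j, NormedSpace ℝ (X j)]

/-- Invariant for a family of coordinate sets. -/
def GoodFam (R : ℝ) (C : ∀ j, Set (StrongDual ℝ (X j))) : Prop :=
  ∀ j, IsClosed (preW (C j)) ∧ C j ⊆ closedBall 0 R

lemma isBounded_biUnion_piDSet {R : ℝ} {F : Set (∀ j, Set (StrongDual ℝ (X j)))}
    (hFfin : F.Finite) (hF : ∀ C ∈ F, GoodFam R C) :
    IsBounded (⋃ C ∈ F, piDSet C) := by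
  refine (isBounded_biUnion hFfin).2 fun C hC => ?_
  exact isBounded_closedBall.subset (piDSet_subset_closedBall fun j => (hF C hC j).2)

/-- The main inductive step machine: iterated Szlenk derivations of a finite union of
products of coordinate sets are contained in a finite union of products of iterated
coordinate-wise Szlenk derivations, with control on the derivation amounts. -/
lemma claimB {R : ℝ} (hR : 0 ≤ R) {θ : ℝ} (hθ : 0 < θ) (l : List ℝ) (hl : ∀ ε ∈ l, 0 < ε)
    (F₀ : Set (∀ j, Set (StrongDual ℝ (X j)))) (hF₀fin : F₀.Finite)
    (hF₀ : ∀ C ∈ F₀, GoodFam R C) :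
    ∃ F : Set (∀ j, Set (StrongDual ℝ (X j))), F.Finite ∧
      (∀ C ∈ F, GoodFam R C) ∧
      szlenkDerivList l (⋃ C ∈ F₀, piDSet C) ⊆ (⋃ C ∈ F, piDSet C) ∧
      ∀ C ∈ F, ∃ C₀ ∈ F₀, ∃ m : ∀ j, List ℝ,
        (∀ j, ∀ x ∈ m j, 0 < x) ∧
        l.sum / 2 - 2 * l.length * θ ≤ ∑ j, (m j).sum ∧
        ∀ j, C j ⊆ szlenkDerivList (m j) (C₀ j) := by
  induction l with
  | nil =>
    refine ⟨F₀, hF₀fin, hF₀, subset_rfl, fun C hC => ⟨C, hC, fun _ => [], ?_, ?_, ?_⟩⟩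
    · intro j x hx; simp at hx
    · simp
    · intro j; exact subset_rfl
  | cons ε l ih =>
    obtain ⟨F, hFfin, hFgood, hFsub, hFstruct⟩ := ih fun x hx => hl x (List.mem_cons_of_mem ε hx)
    have hε : 0 < ε := hl ε List.mem_cons_self
    set γ := θ / (N + 1) with hγdef
    have hγ : 0 < γ := by positivity
    set K : ℕ := ⌈2 * R / γ⌉₊ with hKdef
    set W : Set (Fin N → ℕ) :=
      {w | (∀ j, w j ≤ K) ∧ ε / 2 - 2 * θ ≤ ∑ j, γ * (w j : ℝ)} with hWdef
    have hWfin : W.Finite := by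
      have h1 : (Set.pi Set.univ fun _ : Fin N => Set.Iic K).Finite :=
        Set.Finite.pi fun _ => Set.finite_Iic K
      refine h1.subset fun w hw => ?_
      rw [Set.mem_pi]
      exact fun j _ => hw.1 j
    classical
    set newC : (∀ j, Set (StrongDual ℝ (X j))) → (Fin N → ℕ) →
        (∀ j, Set (StrongDual ℝ (X j))) :=
      fun C w j => if w j = 0 then C j else szlenkDeriv (γ * w j) (C j) with hnewC
    have hnewC_subset : ∀ C w j, newC C w j ⊆ C j := by
      intro C w j
      simp only [hnewC]
      split
      · exact subset_rfl
      · exact szlenkDeriv_subset _ _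
    refine ⟨⋃ C ∈ F, (newC C) '' W, hFfin.biUnion fun C _ => (hWfin.image _), ?_, ?_, ?_⟩
    · -- goodness
      intro C' hC'
      simp only [Set.mem_iUnion] at hC'
      obtain ⟨C, hC, w, _, rfl⟩ := hC'
      intro j
      constructor
      · simp only [hnewC]
        split
        · exact (hFgood C hC j).1
        · exact isClosed_preW_szlenkDeriv (hFgood C hC j).1 _
      · exact (hnewC_subset C w j).trans (hFgood C hC j).2
    · -- the inclusion
      intro f hf
      have hf2 : f ∈ szlenkDeriv ε (⋃ C ∈ F, piDSet C) := by
        refine szlenkDeriv_mono hFsub (isBounded_biUnion_piDSet hFfin hFgood) ε hf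
      have hre : (⋃ C ∈ F, piDSet C) = ⋃₀ (piDSet '' F) := (Set.sUnion_image _ _).symm
      rw [hre] at hf2
      have hf3 := szlenkDeriv_sUnion (hFfin.image _)
        (by rintro A ⟨C, hC, rfl⟩; exact isClosed_preW_piDSet fun j => (hFgood C hC j).1)
        (by rintro A ⟨C, hC, rfl⟩
            exact isBounded_closedBall.subset
              (piDSet_subset_closedBall fun j => (hFgood C hC j).2))
        hε.le hf2
      simp only [Set.mem_iUnion] at hf3
      obtain ⟨A, ⟨C, hC, rfl⟩, hfA⟩ := hf3
      obtain ⟨δ, hδ0, hδub, hδsum, hδC, hδmem⟩ :=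
        mem_szlenkDeriv_piDSet hR (fun j => (hFgood C hC j).2) hθ hfA
      set w : Fin N → ℕ := fun j => ⌊δ j / γ⌋₊ with hwdef
      have hwle : ∀ j, γ * w j ≤ δ j := by
        intro j
        have h1 : (⌊δ j / γ⌋₊ : ℝ) ≤ δ j / γ := Nat.floor_le (div_nonneg (hδ0 j) hγ.le)
        calc γ * (w j : ℝ) ≤ γ * (δ j / γ) := by
              exact mul_le_mul_of_nonneg_left h1 hγ.le
          _ = δ j := by field_simp
      have hwge : ∀ j, δ j - γ ≤ γ * w j := by
        intro j
        have h1 : δ j / γ < ⌊δ j / γ⌋₊ + 1 := Nat.lt_floor_add_one _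
        have h2 : δ j < γ * (⌊δ j / γ⌋₊ + 1) := by
          rw [mul_comm]
          calc δ j = (δ j / γ) * γ := by field_simp
            _ < ((⌊δ j / γ⌋₊ : ℝ) + 1) * γ := by
                exact mul_lt_mul_of_pos_right h1 hγ
        have := h2
        rw [mul_add, mul_one] at this
        linarith
      have hwW : w ∈ W := by
        constructor
        · intro j
          have h1 : δ j / γ ≤ 2 * R / γ := by
            gcongr
            exact hδub j
          calc w j = ⌊δ j / γ⌋₊ := rfl
            _ ≤ ⌊2 * R / γ⌋₊ := Nat.floor_mono h1
            _ ≤ ⌈2 * R / γ⌉₊ := Nat.floor_le_ceil _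
        · have h1 : ∑ j, (δ j - γ) ≤ ∑ j, γ * (w j : ℝ) :=
            Finset.sum_le_sum fun j _ => hwge j
          have h2 : ∑ j, (δ j - γ) = (∑ j, δ j) - N * γ := by
            rw [Finset.sum_sub_distrib]; simp [mul_comm]
          have h3 : (N : ℝ) * γ ≤ θ := by
            rw [hγdef, mul_div_assoc', div_le_iff₀ (by positivity)]
            nlinarith [Nat.cast_nonneg (α := ℝ) N]
          have h4 : ε / 2 - θ ≤ ∑ j, δ j := hδsum
          linarith
      have hmem : f ∈ piDSet (newC C w) := by
        intro j
        simp only [hnewC]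
        split
        · exact hδC j
        · rename_i hwj
          have hwjpos : 0 < (w j : ℝ) := by
            have h0 : 0 < w j := Nat.pos_of_ne_zero hwj
            exact_mod_cast h0
          have hγw : 0 < γ * w j := mul_pos hγ hwjpos
          have hδjpos : 0 < δ j := lt_of_lt_of_le hγw (hwle j)
          exact szlenkDeriv_anti (hwle j) _ (hδmem j hδjpos)
      simp only [Set.mem_iUnion]
      exact ⟨newC C w, ⟨C, hC, w, hwW, rfl⟩, hmem⟩
    · -- the structure
      intro C' hC'
      simp only [Set.mem_iUnion] at hC'
      obtain ⟨C, hC, w, hwW, rfl⟩ := hC'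
      obtain ⟨C₀, hC₀, m, hmpos, hmsum, hmsub⟩ := hFstruct C hC
      refine ⟨C₀, hC₀, fun j => if w j = 0 then m j else (γ * w j) :: m j, ?_, ?_, ?_⟩
      · intro j x hx
        simp only at hx
        by_cases hwj : w j = 0
        · rw [if_pos hwj] at hx; exact hmpos j x hx
        · rw [if_neg hwj] at hx
          rcases List.mem_cons.1 hx with rfl | hx'
          · have h0 : 0 < w j := Nat.pos_of_ne_zero hwj
            have h0' : 0 < (w j : ℝ) := by exact_mod_cast h0
            exact mul_pos hγ h0'
          · exact hmpos j x hx'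
      · have hsum : ∑ j, (if w j = 0 then m j else (γ * w j) :: m j).sum
            = (∑ j, (m j).sum) + ∑ j, γ * (w j : ℝ) := by
          rw [← Finset.sum_add_distrib]
          refine Finset.sum_congr rfl fun j _ => ?_
          by_cases hwj : w j = 0
          · rw [if_pos hwj, hwj]; simp
          · rw [if_neg hwj, List.sum_cons]; ring
        rw [hsum]
        have h1 := hwW.2
        have h2 : (ε :: l).sum = ε + l.sum := List.sum_cons
        have h3 : ((ε :: l).length : ℝ) = l.length + 1 := by
          simp
        rw [h2, h3]
        linarith
      · intro j
        by_cases hwj : w j = 0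
        · simp only [hnewC, if_pos hwj]
          exact hmsub j
        · simp only [hnewC, if_neg hwj]
          have hb : IsBounded (szlenkDerivList (m j) (C₀ j)) :=
            (isBounded_closedBall.subset (hF₀ C₀ hC₀ j).2).subset
              (szlenkDerivList_subset _ _)
          calc szlenkDeriv (γ * w j) (C j)
              ⊆ szlenkDeriv (γ * w j) (szlenkDerivList (m j) (C₀ j)) :=
                szlenkDeriv_mono (hmsub j) hb _
            _ = szlenkDerivList ((γ * w j) :: m j) (C₀ j) := rfl

end ClaimB
section Final

open Metric Bornology NormedSpace

variable {N : ℕ} {X : Fin N → Type*} [∀ j, NormedAddCommGroup (X j)]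
  [∀ j, NormedSpace ℝ (X j)]

lemma list_sum_map_div (l : List ℝ) (r : ℝ) : (l.map (· / r)).sum = l.sum / r := by
  induction l with
  | nil => simp
  | cons x l ih => simp [ih, add_div]

lemma key_estimate (M : ℝ) (hM : 0 < M) (h : ∀ j, HasSummableSzlenkWith (X j) M)
    (l : List ℝ) (hl : ∀ ε ∈ l, 0 < ε)
    (hne : (szlenkDerivList l (dualUnitBall (∀ j, X j))).Nonempty)
    {η θ : ℝ} (hη : 0 < η) (hθ : 0 < θ) :
    l.sum ≤ 2 * M + 2 * N * η * M + 4 * l.length * θ := by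
  classical
  obtain ⟨f, hf⟩ := hne
  set K₀ : ℕ := ⌈1 / η⌉₊ with hK₀
  set net : Set (Fin N → ℝ) :=
    {a | (∀ j, ∃ k : ℕ, k ≤ K₀ ∧ a j = k * η) ∧ (∀ j, 0 ≤ a j) ∧ ∑ j, a j ≤ 1} with hnet
  have hnetfin : net.Finite := by
    have h1 : (Set.pi Set.univ fun _ : Fin N =>
        (fun k : ℕ => (k : ℝ) * η) '' Set.Iic K₀).Finite :=
      Set.Finite.pi fun _ => (Set.finite_Iic K₀).image _
    refine h1.subset fun a ha => ?_
    rw [Set.mem_pi]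
    intro j _
    obtain ⟨k, hk, hak⟩ := ha.1 j
    exact ⟨k, hk, hak.symm⟩
  set F₀ : Set (∀ j, Set (StrongDual ℝ (X j))) :=
    (fun a : Fin N → ℝ => fun j => closedBall (0 : StrongDual ℝ (X j)) (a j + η)) ''
      net with hF₀
  have hF₀fin : F₀.Finite := hnetfin.image _
  have ha_le_one : ∀ a ∈ net, ∀ j, a j ≤ 1 := by
    intro a ha j
    calc a j ≤ ∑ i, a i :=
          Finset.single_le_sum (fun i _ => ha.2.1 i) (Finset.mem_univ j)
      _ ≤ 1 := ha.2.2
  have hF₀good : ∀ C ∈ F₀, GoodFam (1 + η) C := by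
    rintro C ⟨a, hanet, rfl⟩ j
    refine ⟨WeakDual.isClosed_closedBall 0 (a j + η), ?_⟩
    exact closedBall_subset_closedBall (by linarith [ha_le_one a hanet j])
  -- the covering of the unit ball
  have hcover : dualUnitBall (∀ j, X j) ⊆ ⋃ C ∈ F₀, piDSet C := by
    intro g hg
    have hg1 : ‖g‖ ≤ 1 := by
      rw [dualUnitBall, mem_closedBall, dist_zero_right] at hg; exact hg
    set a : Fin N → ℝ := fun j => (⌊‖coordD j g‖ / η⌋₊ : ℝ) * η with ha
    have hcle : ∀ j, ‖coordD j g‖ ≤ 1 := fun j => (norm_coordD_le g j).trans hg1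
    have haj_le : ∀ j, a j ≤ ‖coordD j g‖ := by
      intro j
      have h1 : (⌊‖coordD j g‖ / η⌋₊ : ℝ) ≤ ‖coordD j g‖ / η :=
        Nat.floor_le (div_nonneg (norm_nonneg _) hη.le)
      calc (⌊‖coordD j g‖ / η⌋₊ : ℝ) * η ≤ (‖coordD j g‖ / η) * η :=
            mul_le_mul_of_nonneg_right h1 hη.le
        _ = ‖coordD j g‖ := by field_simp
    have hanet : a ∈ net := by
      refine ⟨fun j => ⟨⌊‖coordD j g‖ / η⌋₊, ?_, rfl⟩, fun j => by positivity, ?_⟩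
      · calc ⌊‖coordD j g‖ / η⌋₊ ≤ ⌊1 / η⌋₊ :=
              Nat.floor_mono (by gcongr; exact hcle j)
          _ ≤ ⌈1 / η⌉₊ := Nat.floor_le_ceil _
      · calc ∑ j, a j ≤ ∑ j, ‖coordD j g‖ := Finset.sum_le_sum fun j _ => haj_le j
          _ = ‖g‖ := (norm_eq_sum_coordD g).symm
          _ ≤ 1 := hg1
    have hmem : g ∈ piDSet fun j => closedBall (0 : StrongDual ℝ (X j)) (a j + η) := by
      intro j
      rw [mem_closedBall, dist_zero_right]
      have h1 : ‖coordD j g‖ / η < ⌊‖coordD j g‖ / η⌋₊ + 1 := Nat.lt_floor_add_one _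
      have h2 : ‖coordD j g‖ < ((⌊‖coordD j g‖ / η⌋₊ : ℝ) + 1) * η := by
        calc ‖coordD j g‖ = (‖coordD j g‖ / η) * η := by field_simp
          _ < ((⌊‖coordD j g‖ / η⌋₊ : ℝ) + 1) * η := mul_lt_mul_of_pos_right h1 hη
      rw [add_mul, one_mul] at h2
      exact h2.le
    exact Set.mem_iUnion₂.2 ⟨_, ⟨a, hanet, rfl⟩, hmem⟩
  have hbdd : IsBounded (⋃ C ∈ F₀, piDSet C) := isBounded_biUnion_piDSet hF₀fin hF₀good
  have h1 : szlenkDerivList l (dualUnitBall (∀ j, X j))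
      ⊆ szlenkDerivList l (⋃ C ∈ F₀, piDSet C) := szlenkDerivList_mono hcover hbdd l
  obtain ⟨F, hFfin, hFgood, hFsub, hFstruct⟩ :=
    claimB (R := 1 + η) (by positivity) hθ l hl F₀ hF₀fin hF₀good
  have hfF := hFsub (h1 hf)
  simp only [Set.mem_iUnion] at hfF
  obtain ⟨C, hCF, hfC⟩ := hfF
  obtain ⟨C₀, hC₀, m, hmpos, hmsum, hmsub⟩ := hFstruct C hCF
  obtain ⟨a, hanet, rfl⟩ := hC₀
  have hcoordbound : ∀ j, (m j).sum ≤ (a j + η) * M := by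
    intro j
    have hrpos : 0 < a j + η := by linarith [hanet.2.1 j]
    have hnej : (szlenkDerivList (m j)
        (closedBall (0 : StrongDual ℝ (X j)) (a j + η))).Nonempty :=
      ⟨coordD j f, hmsub j (hfC j)⟩
    rw [← smul_image_closedBall_one hrpos] at hnej
    obtain ⟨g, hg⟩ := hnej
    obtain ⟨g₀, hg₀, _⟩ := szlenkDerivList_smul_image hrpos isBounded_closedBall (m j) hg
    have h3 := h j ((m j).map (· / (a j + η)))
      (by
        intro x hx
        obtain ⟨y, hy, rfl⟩ := List.mem_map.1 hx
        exact div_pos (hmpos j y hy) hrpos)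
      ⟨g₀, hg₀⟩
    rw [list_sum_map_div] at h3
    calc (m j).sum = ((m j).sum / (a j + η)) * (a j + η) := by field_simp
      _ ≤ M * (a j + η) := mul_le_mul_of_nonneg_right h3 hrpos.le
      _ = (a j + η) * M := mul_comm _ _
  have hsuma : ∑ j, a j ≤ 1 := hanet.2.2
  have htot : ∑ j, (m j).sum ≤ (1 + N * η) * M := by
    calc ∑ j, (m j).sum ≤ ∑ j, (a j + η) * M :=
          Finset.sum_le_sum fun j _ => hcoordbound j
      _ = (∑ j, a j + N * η) * M := by
          rw [← Finset.sum_mul, Finset.sum_add_distrib]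
          simp [mul_comm]
      _ ≤ (1 + N * η) * M := by
          have : (0:ℝ) ≤ M := hM.le
          nlinarith
  have hlen := hmsum
  nlinarith [hlen, htot]

end Final

end SzlenkAux

/-- If `X₁, …, X_N` have summable Szlenk index with the same constant `M`,
then the finite c₀-sum (the product with the sup norm, which is the norm of the `Pi` instance)
has summable Szlenk index with constant `4M`. -/
theorem finiteC0Sum_hasSummableSzlenkWith
    (N : ℕ) (X : Fin N → Type*) [∀ j, NormedAddCommGroup (X j)] [∀ j, NormedSpace ℝ (X j)]
    [∀ j, CompleteSpace (X j)]
    (M : ℝ) (hM : 0 < M) (h : ∀ j, HasSummableSzlenkWith (X j) M) :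
    HasSummableSzlenkWith (∀ j, X j) (4 * M) := by
  intro l hl hne
  have key : ∀ η θ : ℝ, 0 < η → 0 < θ →
      l.sum ≤ 2 * M + 2 * N * η * M + 4 * l.length * θ :=
    fun η θ hη hθ => key_estimate M hM h l hl hne hη hθ
  have h2M : l.sum ≤ 2 * M := by
    refine le_of_forall_pos_le_add fun ε hε => ?_
    have hη : (0:ℝ) < ε / (4 * N * M + 4) := by positivity
    have hθ : (0:ℝ) < ε / (8 * l.length + 8) := by positivity
    have hk := key _ _ hη hθ
    have hN : (0:ℝ) ≤ N := Nat.cast_nonneg N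
    have hn : (0:ℝ) ≤ l.length := Nat.cast_nonneg _
    have e1 : 2 * N * (ε / (4 * N * M + 4)) * M ≤ ε / 2 := by
      have heq : 2 * (N:ℝ) * (ε / (4 * N * M + 4)) * M
          = (2 * N * M * ε) / (4 * N * M + 4) := by ring
      rw [heq, div_le_iff₀ (by positivity)]
      nlinarith [mul_nonneg (mul_nonneg hN hM.le) hε.le, hε.le]
    have e2 : 4 * (l.length : ℝ) * (ε / (8 * l.length + 8)) ≤ ε / 2 := by
      have heq : 4 * (l.length : ℝ) * (ε / (8 * l.length + 8))
          = (4 * l.length * ε) / (8 * l.length + 8) := by ring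
      rw [heq, div_le_iff₀ (by positivity)]
      nlinarith [mul_nonneg hn hε.le, hε.le]
    linarith
  linarith
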